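/- The map ϖ : T*S² → 𝒬 is a bijection from T*S² = {(u,v) ∈ ℝ³×ℝ³ : ‖u‖ = 1, ⟨u,v⟩ = 0} onto the affine quadric 𝒬 = {x ∈ ℂ³ : x₁² + x₂² + x₃² = 1}. -/

import Mathlib

open RealInnerProductSpace
open scoped Classical

/-- `T*S² = {(u,v) ∈ ℝ³×ℝ³ : ‖u‖ = 1, ⟨u,v⟩ = 0}`. -/
def cotangentS2 : Set (EuclideanSpace ℝ (Fin 3) × EuclideanSpace ℝ (Fin 3)) :=
  {p | ‖p.1‖ = 1 ∧ ⟪p.1, p.2⟫ = 0}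

/-- The affine quadric `𝒬 = {x ∈ ℂ³ : x₁² + x₂² + x₃² = 1}`. -/
def affineQuadric : Set (Fin 3 → ℂ) :=
  {x | x 0 ^ 2 + x 1 ^ 2 + x 2 ^ 2 = 1}

/-- The map `ϖ : T*S² → ℂ³`, `ϖ(u,v)ⱼ = uⱼ cosh‖v‖ + i vⱼ sinh‖v‖/‖v‖`
(with `sinh‖v‖/‖v‖` interpreted as `1` when `v = 0`). -/
noncomputable def varpi (u v : EuclideanSpace ℝ (Fin 3)) : Fin 3 → ℂ := fun j =>
  (u j : ℂ) * (Real.cosh ‖v‖ : ℝ) +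
    Complex.I * (v j : ℂ) * ((if v = 0 then 1 else Real.sinh ‖v‖ / ‖v‖ : ℝ) : ℂ)

lemma normsq3 (w : EuclideanSpace ℝ (Fin 3)) : ‖w‖^2 = w 0^2 + w 1^2 + w 2^2 := by
  rw [EuclideanSpace.norm_eq, Real.sq_sqrt (by positivity)]
  simp [Fin.sum_univ_three, sq_abs]

lemma inner3 (a b : EuclideanSpace ℝ (Fin 3)) : ⟪a,b⟫ = a 0*b 0 + a 1*b 1 + a 2*b 2 := by
  simp [PiLp.inner_apply, Fin.sum_univ_three, RCLike.inner_apply]; ring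

lemma cosh_inj_nonneg {a b : ℝ} (ha : 0 ≤ a) (hb : 0 ≤ b)
    (h : Real.cosh a = Real.cosh b) : a = b := by
  have h1 : Real.sinh a = Real.sinh b := by
    have hsq : Real.sinh a ^ 2 = Real.sinh b ^ 2 := by
      rw [Real.sinh_sq, Real.sinh_sq, h]
    calc Real.sinh a = Real.sqrt (Real.sinh a ^ 2) :=
          (Real.sqrt_sq (Real.sinh_nonneg_iff.2 ha)).symm
      _ = Real.sqrt (Real.sinh b ^ 2) := by rw [hsq]
      _ = Real.sinh b := Real.sqrt_sq (Real.sinh_nonneg_iff.2 hb)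
  rw [← Real.arsinh_sinh a, ← Real.arsinh_sinh b, h1]

lemma varpi_re (u v : EuclideanSpace ℝ (Fin 3)) (j : Fin 3) :
    (varpi u v j).re = u j * Real.cosh ‖v‖ := by simp [varpi]

lemma varpi_im (u v : EuclideanSpace ℝ (Fin 3)) (j : Fin 3) :
    (varpi u v j).im = v j * (if v = 0 then 1 else Real.sinh ‖v‖ / ‖v‖) := by
  simp [varpi]

lemma varpi_mapsTo {u v : EuclideanSpace ℝ (Fin 3)} (h1 : ‖u‖ = 1) (h2 : ⟪u, v⟫ = 0) :
    varpi u v ∈ affineQuadric := by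
  set c : ℝ := Real.cosh ‖v‖ with hc
  set s : ℝ := if v = 0 then 1 else Real.sinh ‖v‖ / ‖v‖ with hs
  have h1sq : u 0^2 + u 1^2 + u 2^2 = 1 := by rw [← normsq3, h1]; norm_num
  have h2' : u 0*v 0 + u 1*v 1 + u 2*v 2 = 0 := by rw [← inner3]; exact h2
  have hcs : c^2 - s^2 * (v 0^2 + v 1^2 + v 2^2) = 1 := by
    rw [← normsq3]
    by_cases hv : v = 0
    · simp [hc, hs, hv]
    · have hnv : ‖v‖ ≠ 0 := norm_ne_zero_iff.2 hv
      rw [hs, if_neg hv, hc, div_pow, div_mul_cancel₀ _ (pow_ne_zero 2 hnv)]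
      exact Real.cosh_sq_sub_sinh_sq ‖v‖
  have h1C : ((u 0 : ℂ))^2 + (u 1 : ℂ)^2 + (u 2 : ℂ)^2 = 1 := by
    have := congrArg (fun r : ℝ => (r : ℂ)) h1sq; push_cast at this; exact this
  have h2C : (u 0 : ℂ)*(v 0 : ℂ) + (u 1 : ℂ)*(v 1 : ℂ) + (u 2 : ℂ)*(v 2 : ℂ) = 0 := by
    have := congrArg (fun r : ℝ => (r : ℂ)) h2'; push_cast at this; exact this
  have hcsC : (c : ℂ)^2 - (s : ℂ)^2 * ((v 0 : ℂ)^2 + (v 1 : ℂ)^2 + (v 2 : ℂ)^2) = 1 := by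
    exact_mod_cast hcs
  show varpi u v 0 ^ 2 + varpi u v 1 ^ 2 + varpi u v 2 ^ 2 = 1
  simp only [varpi, ← hs, ← hc]
  linear_combination (c : ℂ)^2 * h1C + hcsC + 2*(c:ℂ)*(s:ℂ)*Complex.I * h2C + ((v 0 : ℂ)^2 + (v 1 : ℂ)^2 + (v 2 : ℂ)^2)*(s:ℂ)^2*Complex.I_sq

lemma varpi_injOn : Set.InjOn (fun p : EuclideanSpace ℝ (Fin 3) × EuclideanSpace ℝ (Fin 3) =>
    varpi p.1 p.2) cotangentS2 := by
  rintro ⟨u, v⟩ ⟨h1, h2⟩ ⟨u', v'⟩ ⟨h1', h2'⟩ heq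
  simp only at heq h1 h1' h2 h2'
  have hre : ∀ j, u j * Real.cosh ‖v‖ = u' j * Real.cosh ‖v'‖ := fun j => by
    rw [← varpi_re u v j, ← varpi_re u' v' j, heq]
  have him : ∀ j, v j * (if v = 0 then 1 else Real.sinh ‖v‖ / ‖v‖)
      = v' j * (if v' = 0 then 1 else Real.sinh ‖v'‖ / ‖v'‖) := fun j => by
    rw [← varpi_im u v j, ← varpi_im u' v' j, heq]
  have h1sq : u 0^2 + u 1^2 + u 2^2 = 1 := by rw [← normsq3, h1]; norm_num
  have h1sq' : u' 0^2 + u' 1^2 + u' 2^2 = 1 := by rw [← normsq3, h1']; norm_num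
  have hcsq : Real.cosh ‖v‖ ^ 2 = Real.cosh ‖v'‖ ^ 2 := by
    have f0 : (u 0 * Real.cosh ‖v‖)^2 = (u' 0 * Real.cosh ‖v'‖)^2 := by rw [hre 0]
    have f1 : (u 1 * Real.cosh ‖v‖)^2 = (u' 1 * Real.cosh ‖v'‖)^2 := by rw [hre 1]
    have f2 : (u 2 * Real.cosh ‖v‖)^2 = (u' 2 * Real.cosh ‖v'‖)^2 := by rw [hre 2]
    linear_combination f0 + f1 + f2 - (Real.cosh ‖v‖)^2 * h1sq + (Real.cosh ‖v'‖)^2 * h1sq'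
  have hc : Real.cosh ‖v‖ = Real.cosh ‖v'‖ := by
    nlinarith [Real.one_le_cosh ‖v‖, Real.one_le_cosh ‖v'‖]
  have hnorm : ‖v‖ = ‖v'‖ := cosh_inj_nonneg (norm_nonneg v) (norm_nonneg v') hc
  have hcne : Real.cosh ‖v‖ ≠ 0 := by nlinarith [Real.one_le_cosh ‖v‖]
  have hu : u = u' := by
    ext j
    have := hre j
    rw [← hc] at this
    exact mul_right_cancel₀ hcne this
  have hv : v = v' := by
    by_cases hv0 : v = 0
    · have : v' = 0 := by
        rw [← norm_eq_zero, ← hnorm, hv0, norm_zero]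
      rw [hv0, this]
    · have hv0' : v' ≠ 0 := by
        intro h; apply hv0
        rw [← norm_eq_zero, hnorm, h, norm_zero]
      have hnv : (0:ℝ) < ‖v‖ := norm_pos_iff.2 hv0
      have hspos : (0:ℝ) < Real.sinh ‖v‖ / ‖v‖ :=
        div_pos (Real.sinh_pos_iff.2 hnv) hnv
      ext j
      have := him j
      rw [if_neg hv0, if_neg hv0', ← hnorm] at this
      exact mul_right_cancel₀ (ne_of_gt hspos) this
  rw [hu, hv]

lemma varpi_surjOn : Set.SurjOn (fun p : EuclideanSpace ℝ (Fin 3) × EuclideanSpace ℝ (Fin 3) =>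
    varpi p.1 p.2) cotangentS2 affineQuadric := by
  rintro x hx
  have hx' : x 0^2 + x 1^2 + x 2^2 = 1 := hx
  set a : EuclideanSpace ℝ (Fin 3) := WithLp.toLp 2 (fun j => (x j).re) with ha
  set b : EuclideanSpace ℝ (Fin 3) := WithLp.toLp 2 (fun j => (x j).im) with hb
  have haj : ∀ j, a j = (x j).re := fun j => rfl
  have hbj : ∀ j, b j = (x j).im := fun j => rfl
  have hre : a 0^2 + a 1^2 + a 2^2 - (b 0^2 + b 1^2 + b 2^2) = 1 := by
    have := congrArg Complex.re hx'
    simp [sq, Complex.mul_re, Complex.add_re, ← haj, ← hbj] at this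
    linarith
  have him : a 0*b 0 + a 1*b 1 + a 2*b 2 = 0 := by
    have := congrArg Complex.im hx'
    simp [sq, Complex.mul_im, Complex.add_im, ← haj, ← hbj] at this
    linarith
  set t : ℝ := Real.arsinh ‖b‖ with htdef
  have ht0 : 0 ≤ t := Real.arsinh_nonneg_iff.2 (norm_nonneg b)
  have hsinh : Real.sinh t = ‖b‖ := Real.sinh_arsinh ‖b‖
  have hna : ‖a‖^2 = 1 + ‖b‖^2 := by rw [normsq3, normsq3]; linarith
  have hcosh : Real.cosh t = ‖a‖ := by
    rw [htdef, Real.cosh_arsinh, ← hna, Real.sqrt_sq (norm_nonneg a)]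
  have hapos : (0:ℝ) < ‖a‖ := by
    rw [← hcosh]; nlinarith [Real.one_le_cosh t]
  have hane : ‖a‖ ≠ 0 := ne_of_gt hapos
  set u : EuclideanSpace ℝ (Fin 3) := ‖a‖⁻¹ • a with hu
  set v : EuclideanSpace ℝ (Fin 3) := if b = 0 then 0 else (t / ‖b‖) • b with hv
  have hnv : ‖v‖ = t := by
    by_cases hb0 : b = 0
    · rw [hv, if_pos hb0, norm_zero, htdef, hb0, norm_zero, Real.arsinh_zero]
    · have hbpos : (0:ℝ) < ‖b‖ := norm_pos_iff.2 hb0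
      rw [hv, if_neg hb0, norm_smul, Real.norm_eq_abs,
        abs_of_nonneg (div_nonneg ht0 hbpos.le), div_mul_cancel₀ _ (ne_of_gt hbpos)]
  have hmem : (u, v) ∈ cotangentS2 := by
    constructor
    · show ‖u‖ = 1
      rw [hu, norm_smul, Real.norm_eq_abs, abs_of_nonneg (inv_nonneg.2 hapos.le),
        inv_mul_cancel₀ hane]
    · show ⟪u, v⟫ = 0
      have hab : ⟪a, b⟫ = 0 := by rw [inner3]; exact him
      by_cases hb0 : b = 0
      · rw [hv, if_pos hb0, inner_zero_right]
      · rw [hu, hv, if_neg hb0, real_inner_smul_left, real_inner_smul_right, hab]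
        ring
  refine ⟨(u, v), hmem, ?_⟩
  show varpi u v = x
  funext j
  apply Complex.ext
  · rw [varpi_re, hnv, hcosh, hu]
    show ‖a‖⁻¹ * a j * ‖a‖ = (x j).re
    rw [haj j]
    field_simp
  · rw [varpi_im, hnv]
    by_cases hb0 : b = 0
    · have hb0j : b j = 0 := by rw [hb0]; rfl
      have hv0 : v = 0 := by rw [hv, if_pos hb0]
      rw [hv0, if_pos rfl]
      show (0:EuclideanSpace ℝ (Fin 3)) j * 1 = (x j).im
      rw [← hbj j, hb0j]
      simp
    · have hbpos : (0:ℝ) < ‖b‖ := norm_pos_iff.2 hb0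
      have htpos : (0:ℝ) < t := Real.arsinh_pos_iff.2 hbpos
      have hvne : v ≠ 0 := by
        intro h
        rw [h, norm_zero] at hnv
        exact absurd hnv.symm (ne_of_gt htpos)
      rw [if_neg hvne, hv, if_neg hb0]
      show (t / ‖b‖) * b j * (Real.sinh t / t) = (x j).im
      rw [hsinh, hbj j]
      field_simp

/-- `ϖ` is a bijection from `T*S²` onto the affine quadric `𝒬`. -/
theorem varpi_bijOn_quadric :
    Set.BijOn (fun p : EuclideanSpace ℝ (Fin 3) × EuclideanSpace ℝ (Fin 3) =>
      varpi p.1 p.2) cotangentS2 affineQuadric := by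
  refine ⟨?_, varpi_injOn, varpi_surjOn⟩
  rintro ⟨u, v⟩ ⟨h1, h2⟩
  exact varpi_mapsTo h1 h2
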